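/- Let k ≥ 1 be an integer, s ≥ 0, and suppose given for m = 1, …, s integers g_m ≥ 0, n_m ≥ 0, ℓ_m ≥ 0 and rationals D_m satisfying k·D_m + 2g_m − 2 + n_m + ℓ_m ≥ 0. Suppose also given finitely many rationals N_v and nonnegative integers δ_v, e_v with k·N_v = δ_v + e_v for each v, and Σ_v e_v = Σ_{m=1}^s n_m. If g, ℓ are integers with Σ_m g_m ≤ g and Σ_m ℓ_m ≤ ℓ, then d_∞ := Σ_m D_m + Σ_v N_v satisfies 2k·d_∞ + 4g + 2ℓ ≥ 4s + 2·Σ_v δ_v. -/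
import Mathlib

theorem stmt_14 (k : ℕ) (hk : 1 ≤ k) (s : ℕ)
    (g' n ℓ' : Fin s → ℕ) (D : Fin s → ℚ)
    (hD : ∀ m, 0 ≤ (k : ℚ) * D m + 2 * (g' m : ℚ) - 2 + (n m : ℚ) + (ℓ' m : ℚ))
    (r : ℕ) (N : Fin r → ℚ) (δ e : Fin r → ℕ)
    (hN : ∀ v, (k : ℚ) * N v = (δ v : ℚ) + (e v : ℚ))
    (he : ∑ v, e v = ∑ m, n m)
    (g ℓ : ℤ) (hg : (∑ m, (g' m : ℤ)) ≤ g) (hℓ : (∑ m, (ℓ' m : ℤ)) ≤ ℓ) :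
    4 * (s : ℚ) + 2 * (∑ v, (δ v : ℚ)) ≤
      2 * (k : ℚ) * ((∑ m, D m) + ∑ v, N v) + 4 * (g : ℚ) + 2 * (ℓ : ℚ) := by
  have h1 : 0 ≤ ∑ m, ((k : ℚ) * D m + 2 * (g' m : ℚ) - 2 + (n m : ℚ) + (ℓ' m : ℚ)) :=
    Finset.sum_nonneg fun m _ => hD m
  have h2 : (k : ℚ) * ∑ v, N v = (∑ v, (δ v : ℚ)) + ∑ m, (n m : ℚ) := by
    rw [Finset.mul_sum]
    calc ∑ v, (k : ℚ) * N v = ∑ v, ((δ v : ℚ) + (e v : ℚ)) :=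
          Finset.sum_congr rfl fun v _ => hN v
      _ = (∑ v, (δ v : ℚ)) + ∑ v, (e v : ℚ) := Finset.sum_add_distrib
      _ = (∑ v, (δ v : ℚ)) + ∑ m, (n m : ℚ) := by
          congr 1
          simp only [← Nat.cast_sum, he]
  have hgq : (∑ m, (g' m : ℚ)) ≤ (g : ℚ) := by exact_mod_cast hg
  have hℓq : (∑ m, (ℓ' m : ℚ)) ≤ (ℓ : ℚ) := by exact_mod_cast hℓ
  simp only [Finset.sum_add_distrib, Finset.sum_sub_distrib, ← Finset.mul_sum,
    Finset.sum_const, Finset.card_univ, Fintype.card_fin, nsmul_eq_mul, mul_one] at h1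
  linarith
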